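/- Let U ⊆ Y be a C-contracting closed subset, let r ≥ 100C, and let α be a geodesic with ‖N_r(U) ∩ α‖ > 3r, with entry and exit points x, y of α in N_r(U) (i.e. x, y ∈ α ∩ N_r(U), d(x,y) = ‖N_r(U) ∩ α‖, and x precedes y along α). Let β be a geodesic with d_U(α⁻, β⁻) ≤ 10C and d_U(α⁺, β⁺) ≤ 10C. Then β meets N_r(U), and the entry and exit points of β in N_r(U) are within distance 4r of x and y respectively. -/

import Mathlib

open Metric Filter Topology Set MeasureTheory Pointwise

noncomputable section

namespace ConfDyn

/-- `γ` is (the image of) a geodesic segment from `x` to `y`. -/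
def IsGeodesicIn (Y : Type*) [MetricSpace Y] (γ : Set Y) (x y : Y) : Prop :=
  ∃ f : ℝ → Y, f 0 = x ∧ f (dist x y) = y ∧
    (∀ s ∈ Set.Icc (0 : ℝ) (dist x y), ∀ t ∈ Set.Icc (0 : ℝ) (dist x y),
      dist (f s) (f t) = |s - t|) ∧
    γ = f '' Set.Icc (0 : ℝ) (dist x y)

/-- `Y` is a geodesic metric space. -/
def GeodesicSpace (Y : Type*) [MetricSpace Y] : Prop :=
  ∀ x y : Y, ∃ γ : Set Y, IsGeodesicIn Y γ x y

/-- the shortest projection of the point `y` to the subset `X`. -/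
def projSet {Y : Type*} [MetricSpace Y] (X : Set Y) (y : Y) : Set Y :=
  {x ∈ X | dist y x = Metric.infDist y X}

/-- the shortest projection of the subset `A` to the subset `X`. -/
def projSetOf {Y : Type*} [MetricSpace Y] (X A : Set Y) : Set Y :=
  ⋃ a ∈ A, projSet X a

/-- `d_X(x,y)`, the diameter of `π_X(x) ∪ π_X(y)`. -/
def projDist {Y : Type*} [MetricSpace Y] (X : Set Y) (x y : Y) : ENNReal :=
  EMetric.diam (projSet X x ∪ projSet X y)

/-- `X` is a `C`-contracting subset: any geodesic segment at distance at least `C`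
from `X` has shortest projection to `X` of diameter at most `C`. -/
def IsContractingSet {Y : Type*} [MetricSpace Y] (C : ℝ) (X : Set Y) : Prop :=
  ∀ x y : Y, ∀ γ : Set Y, IsGeodesicIn Y γ x y →
    (∀ p ∈ γ, C ≤ Metric.infDist p X) →
    EMetric.diam (projSetOf X γ) ≤ ENNReal.ofReal C

/-- the Busemann function based at `o` associated to `y`, `b_y(x) = d(x,y) - d(o,y)`. -/
def busemannCM {Y : Type*} [MetricSpace Y] (o y : Y) : C(Y, ℝ) :=
  ⟨fun x => dist x y - dist o y,
    (continuous_id.dist continuous_const).sub continuous_const⟩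

/-- the horofunction compactification of `Y`: the closure of `{b_y : y ∈ Y}` in
`C(Y,ℝ)` with the compact-open topology. -/
def horoCpt (Y : Type*) [MetricSpace Y] (o : Y) : Set C(Y, ℝ) :=
  closure (Set.range (busemannCM o))

/-- `ξ` is a point of the horofunction boundary `∂_h Y`. -/
def IsHoroPoint {Y : Type*} [MetricSpace Y] (o : Y) (ξ : C(Y, ℝ)) : Prop :=
  ξ ∈ horoCpt Y o ∧ ∀ y : Y, ξ ≠ busemannCM o y

/-- a sequence of points of `Y` converges to `ξ` in the horofunction compactification. -/
def HoroConv {Y : Type*} [MetricSpace Y] (o : Y) (u : ℕ → Y) (ξ : C(Y, ℝ)) : Prop :=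
  Filter.Tendsto (fun n => busemannCM o (u n)) atTop (nhds ξ)

/-- two horofunctions have (K-)finite difference for some K. -/
def FinDiff {Y : Type*} [MetricSpace Y] (ξ η : C(Y, ℝ)) : Prop :=
  ∃ K : ℝ, ∀ z : Y, |ξ z - η z| ≤ K

/-- the locus of a subset of the horofunction boundary. -/
def locus {Y : Type*} [MetricSpace Y] (o : Y) (Λ : Set C(Y, ℝ)) : Set C(Y, ℝ) :=
  {η | IsHoroPoint o η ∧ ∃ ξ ∈ Λ, FinDiff ξ η}

/-- the finite-difference relation as a setoid on `C(Y,ℝ)`. -/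
def finDiffSetoid (Y : Type*) [MetricSpace Y] : Setoid C(Y, ℝ) where
  r := FinDiff
  iseqv := ⟨fun ξ => ⟨0, fun z => by simp⟩,
    fun h => h.imp (fun K hK z => by rw [abs_sub_comm]; exact hK z),
    fun h₁ h₂ => by
      obtain ⟨K₁, hK₁⟩ := h₁
      obtain ⟨K₂, hK₂⟩ := h₂
      exact ⟨K₁ + K₂, fun z => (abs_sub_le _ _ _).trans (add_le_add (hK₁ z) (hK₂ z))⟩⟩

/-- the limit set of a subset `X ⊆ Y` in the horofunction boundary. -/
def limitSetOf {Y : Type*} [MetricSpace Y] (o : Y) (X : Set Y) : Set C(Y, ℝ) :=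
  {ξ | IsHoroPoint o ξ ∧ ∃ u : ℕ → Y, (∀ n, u n ∈ X) ∧ HoroConv o u ξ}

/-- accumulation points of a sequence of points of `Y` in the horofunction boundary. -/
def accPoints {Y : Type*} [MetricSpace Y] (o : Y) (u : ℕ → Y) : Set C(Y, ℝ) :=
  {ξ | IsHoroPoint o ξ ∧ ∃ φ : ℕ → ℕ, StrictMono φ ∧ HoroConv o (u ∘ φ) ξ}

/-- `X` is a quasi-geodesic: the image of a quasi-isometric embedding of a real interval. -/
def IsQuasiGeodesicSet {Y : Type*} [MetricSpace Y] (X : Set Y) : Prop :=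
  ∃ (c : ℝ) (I : Set ℝ) (φ : ℝ → Y), 1 ≤ c ∧ I.OrdConnected ∧ X = φ '' I ∧
    ∀ s ∈ I, ∀ t ∈ I,
      (1 / c) * |s - t| - c ≤ dist (φ s) (φ t) ∧ dist (φ s) (φ t) ≤ c * |s - t| + c

section GroupAction

variable {Y : Type*} [MetricSpace Y] {G : Type*} [Group G] [MulAction G Y]

/-- `G` acts by isometries on `Y`. -/
def IsometricAction (G Y : Type*) [Group G] [MulAction G Y] [MetricSpace Y] : Prop :=
  ∀ g : G, Isometry (fun y : Y => g • y)

/-- the action of `G` on `Y` is (metrically) proper. -/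
def ProperAction (G Y : Type*) [Group G] [MulAction G Y] [MetricSpace Y] : Prop :=
  ∀ B : Set Y, Bornology.IsBounded B → Set.Finite {g : G | (g • B) ∩ B ≠ ∅}

/-- `G` is non-elementary: no finite-index subgroup is trivial or infinite cyclic. -/
def NonElementary (G : Type*) [Group G] : Prop :=
  ∀ H : Subgroup G, H.index ≠ 0 → ∀ g : G, H ≠ Subgroup.zpowers g

/-- the orbit of `o` under the cyclic group generated by `f`. -/
def cyclicOrbit (o : Y) (f : G) : Set Y :=
  {y : Y | ∃ n : ℤ, y = f ^ n • o}

/-- `f` is a contracting element with `C`-contracting orbit: it has infinite order,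
`n ↦ fⁿ • o` is a quasi-isometric embedding of `ℤ`, and `⟨f⟩ • o` is `C`-contracting. -/
def IsContractingElt (o : Y) (C : ℝ) (f : G) : Prop :=
  (∀ n : ℤ, n ≠ 0 → f ^ n ≠ 1) ∧
  (∃ c : ℝ, 1 ≤ c ∧ ∀ m n : ℤ,
      (1 / c) * |(m : ℝ) - (n : ℝ)| - c ≤ dist (f ^ m • o) (f ^ n • o) ∧
      dist (f ^ m • o) (f ^ n • o) ≤ c * |(m : ℝ) - (n : ℝ)| + c) ∧
  IsContractingSet C (cyclicOrbit o f)

/-- `f` is a contracting element. -/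
def IsContractingEltAny (o : Y) (f : G) : Prop :=
  ∃ C : ℝ, 1 ≤ C ∧ IsContractingElt o C f

/-- the elementary group `E(f)`: elements moving `⟨f⟩ • o` a finite Hausdorff distance. -/
def EGroup (o : Y) (f : G) : Set G :=
  {g : G | EMetric.hausdorffEdist (g • cyclicOrbit o f) (cyclicOrbit o f) ≠ ⊤}

/-- the axis `Ax(f) = E(f) • o`. -/
def axisOf (o : Y) (f : G) : Set Y :=
  (fun g : G => g • o) '' EGroup o f

/-- the family of all `G`-translated axes of `h` and `k`. -/
def axesPairFam (o : Y) (h k : G) : Set (Set Y) :=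
  {S | ∃ g : G, S = g • axisOf o h ∨ S = g • axisOf o k}

/-- `h` and `k` are independent contracting elements: the family of their translated
axes has bounded projection. -/
def IndepElts (o : Y) (h k : G) : Prop :=
  ∃ B : ℝ, 0 < B ∧ ∀ U ∈ axesPairFam o h k, ∀ V ∈ axesPairFam o h k,
    U ≠ V → EMetric.diam (projSetOf U V) ≤ ENNReal.ofReal B

/-- the family of all `G`-translated axes of the triple `f₁, f₂, f₃`. -/
def axesTripleFam (o : Y) (f₁ f₂ f₃ : G) : Set (Set Y) :=
  {S | ∃ g : G, S = g • axisOf o f₁ ∨ S = g • axisOf o f₂ ∨ S = g • axisOf o f₃}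

/-- `F = {f₁,f₂,f₃}` is an admissible triple with constants `C`, `B₀`: three pairwise
independent contracting elements whose translated axes are `C`-contracting with
`B₀`-bounded projection. -/
def IsAdmissibleTriple (o : Y) (C B₀ : ℝ) (f₁ f₂ f₃ : G) : Prop :=
  f₁ ≠ f₂ ∧ f₁ ≠ f₃ ∧ f₂ ≠ f₃ ∧
  IsContractingEltAny o f₁ ∧ IsContractingEltAny o f₂ ∧ IsContractingEltAny o f₃ ∧
  IndepElts o f₁ f₂ ∧ IndepElts o f₁ f₃ ∧ IndepElts o f₂ f₃ ∧
  (∀ S ∈ axesTripleFam o f₁ f₂ f₃, IsContractingSet C S) ∧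
  (∀ U ∈ axesTripleFam o f₁ f₂ f₃, ∀ V ∈ axesTripleFam o f₁ f₂ f₃,
    U ≠ V → EMetric.diam (projSetOf U V) ≤ ENNReal.ofReal B₀)

/-- the geodesic `γ` contains an `(r,f)`-barrier at `g • o`. -/
def HasBarrier (o : Y) (r : ℝ) (f g : G) (γ : Set Y) : Prop :=
  Metric.infDist (g • o) γ ≤ r ∧ Metric.infDist ((g * f) • o) γ ≤ r

/-- the partial cone `Ω_x^F(g • o, r)`. -/
def partialCone (o x : Y) (f₁ f₂ f₃ : G) (g : G) (r : ℝ) : Set Y :=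
  {z | ∃ γ : Set Y, IsGeodesicIn Y γ x z ∧
      (HasBarrier o r f₁ g γ ∨ HasBarrier o r f₂ g γ ∨ HasBarrier o r f₃ g γ)}

/-- the partial shadow `Π_x^F(g • o, r)`: accumulation points of the partial cone in
the horofunction boundary. -/
def partialShadow (o x : Y) (f₁ f₂ f₃ : G) (g : G) (r : ℝ) : Set C(Y, ℝ) :=
  {ξ | IsHoroPoint o ξ ∧ ∃ u : ℕ → Y, (∀ n, u n ∈ partialCone o x f₁ f₂ f₃ g r) ∧
      HoroConv o u ξ}

/-- `ξ` is an `(r,F)`-conical point. -/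
def IsConicalPt (o : Y) (f₁ f₂ f₃ : G) (r : ℝ) (ξ : C(Y, ℝ)) : Prop :=
  ∃ g₀ : G, Set.Infinite {g : G | ξ ∈ partialShadow o (g₀ • o) f₁ f₂ f₃ g r}

/-- the usual cone `Ω_x(y,r)`. -/
def usualCone (x y : Y) (r : ℝ) : Set Y :=
  {z | ∃ γ : Set Y, IsGeodesicIn Y γ x z ∧ ∃ p ∈ γ, dist p y ≤ r}

/-- the usual shadow `Π_x(y,r)`. -/
def usualShadow (o x y : Y) (r : ℝ) : Set C(Y, ℝ) :=
  {ξ | IsHoroPoint o ξ ∧ ∃ u : ℕ → Y, (∀ n, u n ∈ usualCone x y r) ∧ HoroConv o u ξ}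

/-- the set `Λ_c(G)` of conical points of the action. -/
def conicalSet (G : Type*) {Y : Type*} [Group G] [MulAction G Y] [MetricSpace Y]
    (o : Y) : Set C(Y, ℝ) :=
  {ξ | ∃ r : ℝ, 0 < r ∧ ∃ g₀ : G, ∃ u : ℕ → G,
      Filter.Tendsto (fun n => dist o (u n • o)) atTop atTop ∧
      ∀ n, ξ ∈ usualShadow o (g₀ • o) (u n • o) r}

/-- the attracting fixed-point set `[h⁺]`: the locus of the accumulation points of
`{hⁿ o : n > 0}` in the horofunction boundary. -/
def attrFix (o : Y) (h : G) : Set C(Y, ℝ) :=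
  locus o (accPoints o (fun n : ℕ => h ^ (n + 1) • o))

/-- the repelling fixed-point set `[h⁻]`. -/
def repFix (o : Y) (h : G) : Set C(Y, ℝ) :=
  locus o (accPoints o (fun n : ℕ => h ^ (-(n + 1) : ℤ) • o))

/-- the limit set `Λ G y` of the orbit `G • y` in the horofunction boundary. -/
def orbitLimitSet (G : Type*) {Y : Type*} [Group G] [MulAction G Y] [MetricSpace Y]
    (o y : Y) : Set C(Y, ℝ) :=
  {ξ | IsHoroPoint o ξ ∧ ∃ u : ℕ → G,
      Filter.Tendsto (fun n => busemannCM o (u n • y)) atTop (nhds ξ)}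

/-- the action of an isometry `g` on horofunctions. -/
def horoAct [ContinuousConstSMul G Y] (o : Y) (g : G) (ξ : C(Y, ℝ)) : C(Y, ℝ) :=
  ⟨fun y => ξ (g⁻¹ • y) - ξ (g⁻¹ • o),
    (ξ.continuous.comp (continuous_const_smul g⁻¹)).sub continuous_const⟩

/-- the number of orbit points of `Γ ⊆ G` in the closed ball of radius `R` around `o`. -/
def orbitCount (G : Type*) {Y : Type*} [Group G] [MulAction G Y] [MetricSpace Y]
    (o : Y) (Γ : Set G) (R : ℝ) : ℕ :=
  Nat.card {g : G // g ∈ Γ ∧ dist o (g • o) ≤ R}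

/-- the critical exponent `ω_Γ` of a subset `Γ ⊆ G`. -/
def critExp (G : Type*) {Y : Type*} [Group G] [MulAction G Y] [MetricSpace Y]
    (o : Y) (Γ : Set G) : ℝ :=
  Filter.limsup (fun R : ℝ => Real.log (orbitCount G o Γ R) / R) atTop

/-- an `ω`-dimensional `G`-equivariant conformal density on the horofunction boundary:
a family of finite measures supported on `∂_h Y`, normalized at `o`, `G`-equivariant,
with conformal derivative `dμ_x/dμ_y(ξ) = e^{-ω·B_ξ(x,y)}`. -/
def IsConformalDensity (G : Type*) {Y : Type*} [Group G] [MulAction G Y] [MetricSpace Y]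
    [ContinuousConstSMul G Y] [MeasurableSpace C(Y, ℝ)]
    (o : Y) (ω : ℝ) (μ : Y → MeasureTheory.Measure C(Y, ℝ)) : Prop :=
  (∀ x : Y, MeasureTheory.IsFiniteMeasure (μ x)) ∧
  (∀ x : Y, μ x {ξ : C(Y, ℝ) | ¬ IsHoroPoint o ξ} = 0) ∧
  μ o Set.univ = 1 ∧
  (∀ g : G, ∀ x : Y, MeasureTheory.Measure.map (horoAct o g) (μ x) = μ (g • x)) ∧
  (∀ x y : Y, μ x = (μ y).withDensity
      (fun ξ : C(Y, ℝ) => ENNReal.ofReal (Real.exp (-ω * (ξ x - ξ y)))))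

end GroupAction

section Statement6Helpers


lemma mem_cth_iff {Y : Type*} [MetricSpace Y] {U : Set Y} (hUne : U.Nonempty)
    {r : ℝ} (hr : 0 ≤ r) (x : Y) :
    x ∈ Metric.cthickening r U ↔ Metric.infDist x U ≤ r := by
  rw [Metric.mem_cthickening_iff, Metric.infDist]
  exact ENNReal.le_ofReal_iff_toReal_le (Metric.infEdist_ne_top hUne) hr

lemma projSet_nonempty {Y : Type*} [MetricSpace Y] [ProperSpace Y] {U : Set Y}
    (hUcl : IsClosed U) (hUne : U.Nonempty) (y : Y) : (projSet U y).Nonempty := by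
  obtain ⟨p, hp, hd⟩ := hUcl.exists_infDist_eq_dist hUne y
  exact ⟨p, hp, hd.symm⟩

/-- entry bound: if `f s` is the first point of the geodesic in `N_r(U)`, then it is
within `r + C` of any projection of the start point. -/
lemma entry_bound {Y : Type*} [MetricSpace Y] [ProperSpace Y]
    {C r : ℝ} (hC : 1 ≤ C) (hr : 100 * C ≤ r)
    {U : Set Y} (hUcl : IsClosed U) (hUne : U.Nonempty)
    (hUcon : IsContractingSet C U)
    {a b : Y} {f : ℝ → Y} (hf0 : f 0 = a)
    (hiso : ∀ s ∈ Set.Icc (0:ℝ) (dist a b), ∀ t ∈ Set.Icc (0:ℝ) (dist a b),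
      dist (f s) (f t) = |s - t|)
    {s : ℝ} (hs : s ∈ Set.Icc (0:ℝ) (dist a b))
    (hsmem : f s ∈ Metric.cthickening r U)
    (hbefore : ∀ w, 0 ≤ w → w < s → f w ∉ Metric.cthickening r U)
    {p : Y} (hp : p ∈ projSet U a) : dist (f s) p ≤ r + C := by
  have hC0 : (0:ℝ) < C := lt_of_lt_of_le one_pos hC
  have hr0 : (0:ℝ) ≤ r := le_trans (by nlinarith) hr
  have hCr : C ≤ r := le_trans (by nlinarith) hr
  rcases eq_or_lt_of_le hs.1 with h0 | hspos
  · -- s = 0 : f s = a and dist a p = infDist a U ≤ r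
    have : dist (f s) p ≤ r := by
      rw [← h0, hf0]
      rw [← h0] at hsmem
      rw [hf0] at hsmem
      rw [hp.2]
      exact (mem_cth_iff hUne hr0 a).mp hsmem
    linarith
  · -- s > 0
    refine le_of_forall_pos_le_add fun ε hε => ?_
    set δ := min (ε / 3) s with hδdef
    have hδpos : 0 < δ := lt_min (by linarith) hspos
    have hδs : δ ≤ s := min_le_right _ _
    have hδε : δ ≤ ε / 3 := min_le_left _ _
    set w := s - δ with hwdef
    have hw0 : 0 ≤ w := by simp [hwdef]; linarith
    have hws : w < s := by simp [hwdef]; linarith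
    have hwI : w ∈ Set.Icc (0:ℝ) (dist a b) := ⟨hw0, le_trans (le_of_lt hws) hs.2⟩
    -- the subsegment f '' [0, w] is a geodesic from a to f w
    have hdaw : dist a (f w) = w := by
      rw [← hf0]
      rw [hiso 0 ⟨le_refl _, dist_nonneg⟩ w hwI]
      rw [abs_of_nonpos (by linarith)]; ring
    have hgeo : IsGeodesicIn Y (f '' Set.Icc (0:ℝ) w) a (f w) := by
      refine ⟨f, hf0, by rw [hdaw], ?_, by rw [hdaw]⟩
      intro s' hs' t' ht'
      rw [hdaw] at hs' ht'
      exact hiso s' ⟨hs'.1, le_trans hs'.2 hwI.2⟩ t' ⟨ht'.1, le_trans ht'.2 hwI.2⟩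
    -- all points of the subsegment are far from U
    have hfar : ∀ z ∈ f '' Set.Icc (0:ℝ) w, C ≤ Metric.infDist z U := by
      rintro z ⟨y, hy, rfl⟩
      have hnot := hbefore y hy.1 (lt_of_le_of_lt hy.2 hws)
      rw [mem_cth_iff hUne hr0] at hnot
      push_neg at hnot
      linarith
    have hdiam := hUcon a (f w) _ hgeo hfar
    obtain ⟨q, hq⟩ := projSet_nonempty hUcl hUne (f w)
    have hpmem : p ∈ projSetOf U (f '' Set.Icc (0:ℝ) w) := by
      refine Set.mem_biUnion ⟨0, ⟨le_refl _, hw0⟩, hf0⟩ hp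
    have hqmem : q ∈ projSetOf U (f '' Set.Icc (0:ℝ) w) := by
      refine Set.mem_biUnion ⟨w, ⟨hw0, le_refl _⟩, rfl⟩ hq
    have hpq : dist p q ≤ C := by
      have := (EMetric.edist_le_diam_of_mem hpmem hqmem).trans hdiam
      rwa [edist_le_ofReal (le_of_lt hC0)] at this
    have hws' : dist (f w) (f s) = δ := by
      rw [hiso w hwI s hs, abs_of_nonpos (by simp [hwdef]; linarith)]
      simp [hwdef]
    have hinfw : Metric.infDist (f w) U ≤ r + δ := by
      calc Metric.infDist (f w) U ≤ Metric.infDist (f s) U + dist (f w) (f s) :=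
            Metric.infDist_le_infDist_add_dist
        _ ≤ r + δ := by
            rw [hws']
            have := (mem_cth_iff hUne hr0 (f s)).mp hsmem
            linarith
    have hwq : dist (f w) q = Metric.infDist (f w) U := hq.2
    calc dist (f s) p ≤ dist (f s) (f w) + dist (f w) p := dist_triangle _ _ _
      _ ≤ dist (f s) (f w) + (dist (f w) q + dist q p) := by
          linarith [dist_triangle (f w) q p]
      _ ≤ δ + ((r + δ) + C) := by
          rw [dist_comm (f s) (f w), hws', hwq, dist_comm q p]
          linarith
      _ ≤ r + C + ε := by linarith

lemma exit_bound {Y : Type*} [MetricSpace Y] [ProperSpace Y]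
    {C r : ℝ} (hC : 1 ≤ C) (hr : 100 * C ≤ r)
    {U : Set Y} (hUcl : IsClosed U) (hUne : U.Nonempty)
    (hUcon : IsContractingSet C U)
    {a b : Y} {f : ℝ → Y} (hfl : f (dist a b) = b)
    (hiso : ∀ s ∈ Set.Icc (0:ℝ) (dist a b), ∀ t ∈ Set.Icc (0:ℝ) (dist a b),
      dist (f s) (f t) = |s - t|)
    {t : ℝ} (ht : t ∈ Set.Icc (0:ℝ) (dist a b))
    (htmem : f t ∈ Metric.cthickening r U)
    (hafter : ∀ w, t < w → w ≤ dist a b → f w ∉ Metric.cthickening r U)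
    {q : Y} (hq : q ∈ projSet U b) : dist (f t) q ≤ r + C := by
  set L := dist a b with hLdef
  have hL : dist b a = L := dist_comm b a
  have h2 : ∀ s' ∈ Set.Icc (0:ℝ) (dist b a), ∀ t' ∈ Set.Icc (0:ℝ) (dist b a),
      dist (f (L - s')) (f (L - t')) = |s' - t'| := by
    intro s' hs' t' ht'
    rw [hL] at hs' ht'
    rw [hiso (L - s') ⟨by linarith [hs'.2], by linarith [hs'.1]⟩
        (L - t') ⟨by linarith [ht'.2], by linarith [ht'.1]⟩]
    have e : (L - s') - (L - t') = t' - s' := by ring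
    rw [e, abs_sub_comm]
  have key := entry_bound hC hr hUcl hUne hUcon (f := fun z => f (L - z)) (a := b) (b := a)
      (by simpa using hfl) h2 (s := L - t)
      ⟨by linarith [ht.2], by rw [hL]; linarith [ht.1]⟩
      (by simpa [sub_sub_cancel] using htmem)
      (fun w hw0 hwlt => hafter (L - w) (by linarith) (by linarith)) hq
  simpa [sub_sub_cancel] using key


end Statement6Helpers

/-- if `β` is a geodesic whose endpoints project `10C`-close to those of
`α` on a contracting set `U`, then `β` meets `N_r(U)` and its entry and exit points in
`N_r(U)` are `4r`-close to those of `α`. -/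
theorem statement6 {Y : Type*} [MetricSpace Y] [ProperSpace Y]
    (hY : GeodesicSpace Y) (C r : ℝ) (hC : 1 ≤ C) (hr : 100 * C ≤ r)
    (U : Set Y) (hUcl : IsClosed U) (hUcon : IsContractingSet C U)
    (a b : Y) (f : ℝ → Y) (hf0 : f 0 = a) (hfl : f (dist a b) = b)
    (hiso : ∀ s ∈ Set.Icc (0 : ℝ) (dist a b), ∀ t ∈ Set.Icc (0 : ℝ) (dist a b),
      dist (f s) (f t) = |s - t|)
    (α : Set Y) (hα : α = f '' Set.Icc (0 : ℝ) (dist a b))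
    (hbig : ENNReal.ofReal (3 * r) < EMetric.diam (Metric.cthickening r U ∩ α))
    (s t : ℝ) (hs : s ∈ Set.Icc (0 : ℝ) (dist a b)) (ht : t ∈ Set.Icc (0 : ℝ) (dist a b))
    (hst : s ≤ t)
    (hsmem : f s ∈ Metric.cthickening r U) (htmem : f t ∈ Metric.cthickening r U)
    (hmax : ENNReal.ofReal (dist (f s) (f t)) = EMetric.diam (Metric.cthickening r U ∩ α))
    (a' b' : Y) (g : ℝ → Y) (hg0 : g 0 = a') (hgl : g (dist a' b') = b')
    (hgiso : ∀ s' ∈ Set.Icc (0 : ℝ) (dist a' b'), ∀ t' ∈ Set.Icc (0 : ℝ) (dist a' b'),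
      dist (g s') (g t') = |s' - t'|)
    (β : Set Y) (hβ : β = g '' Set.Icc (0 : ℝ) (dist a' b'))
    (hproj1 : projDist U a a' ≤ ENNReal.ofReal (10 * C))
    (hproj2 : projDist U b b' ≤ ENNReal.ofReal (10 * C)) :
    ∃ u ∈ Set.Icc (0 : ℝ) (dist a' b'), ∃ v ∈ Set.Icc (0 : ℝ) (dist a' b'), u ≤ v ∧
      g u ∈ Metric.cthickening r U ∧ g v ∈ Metric.cthickening r U ∧
      (∀ w ∈ Set.Icc (0 : ℝ) (dist a' b'), g w ∈ Metric.cthickening r U → u ≤ w ∧ w ≤ v) ∧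
      dist (g u) (f s) ≤ 4 * r ∧ dist (g v) (f t) ≤ 4 * r := by
  have hC0 : (0:ℝ) < C := lt_of_lt_of_le one_pos hC
  have hr0 : (0:ℝ) < r := lt_of_lt_of_le (by nlinarith) hr
  have hCr : C ≤ r := le_trans (by nlinarith) hr
  have hUne : U.Nonempty := by
    rcases Set.eq_empty_or_nonempty U with h | h
    · rw [h, Metric.cthickening_empty] at hsmem; exact absurd hsmem (Set.notMem_empty _)
    · exact h
  set N := Metric.cthickening r U with hN
  set L := dist a b with hLdef
  set L' := dist a' b' with hL'def
  -- basic: 3r < dist (f s) (f t) = t - s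
  have h3r : 3 * r < dist (f s) (f t) := by
    rw [← hmax] at hbig
    exact (ENNReal.ofReal_lt_ofReal_iff_of_nonneg (by linarith)).mp hbig
  have hdst : dist (f s) (f t) = t - s := by
    rw [hiso s hs t ht, abs_of_nonpos (by linarith)]; ring
  -- the trace of α on N is exactly f '' [s,t]
  have hIn : ∀ w ∈ Set.Icc (0:ℝ) L, f w ∈ N → s ≤ w ∧ w ≤ t := by
    intro w hw hwN
    have hwα : f w ∈ N ∩ α := ⟨hwN, by rw [hα]; exact ⟨w, hw, rfl⟩⟩
    have hsα : f s ∈ N ∩ α := ⟨hsmem, by rw [hα]; exact ⟨s, hs, rfl⟩⟩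
    have htα : f t ∈ N ∩ α := ⟨htmem, by rw [hα]; exact ⟨t, ht, rfl⟩⟩
    have h1 : dist (f w) (f t) ≤ t - s := by
      have := (EMetric.edist_le_diam_of_mem hwα htα).trans hmax.ge
      rw [edist_le_ofReal dist_nonneg] at this
      rwa [hdst] at this
    have h2 : dist (f w) (f s) ≤ t - s := by
      have := (EMetric.edist_le_diam_of_mem hwα hsα).trans hmax.ge
      rw [edist_le_ofReal dist_nonneg] at this
      rwa [hdst] at this
    rw [hiso w hw t ht] at h1
    rw [hiso w hw s hs] at h2
    constructor
    · have := abs_le.mp h1; linarith [this.1]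
    · have := abs_le.mp h2; linarith [this.2]
  -- pick projections
  obtain ⟨p, hp⟩ := projSet_nonempty hUcl hUne a
  obtain ⟨p', hp'⟩ := projSet_nonempty hUcl hUne a'
  obtain ⟨q, hq⟩ := projSet_nonempty hUcl hUne b
  obtain ⟨q', hq'⟩ := projSet_nonempty hUcl hUne b'
  have hpp' : dist p p' ≤ 10 * C := by
    have := (EMetric.edist_le_diam_of_mem (Set.mem_union_left _ hp)
      (Set.mem_union_right _ hp')).trans hproj1
    rwa [edist_le_ofReal (by linarith)] at this
  have hqq' : dist q q' ≤ 10 * C := by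
    have := (EMetric.edist_le_diam_of_mem (Set.mem_union_left _ hq)
      (Set.mem_union_right _ hq')).trans hproj2
    rwa [edist_le_ofReal (by linarith)] at this
  -- entry and exit bounds for α
  have hxp : dist (f s) p ≤ r + C :=
    entry_bound hC hr hUcl hUne hUcon hf0 hiso hs hsmem
      (fun w hw0 hws hwN => absurd ((hIn w ⟨hw0, le_trans hws.le hs.2⟩ hwN).1)
        (not_le.mpr hws)) hp
  have hyq : dist (f t) q ≤ r + C :=
    exit_bound hC hr hUcl hUne hUcon hfl hiso ht htmem
      (fun w hwt hwL hwN => absurd ((hIn w ⟨le_trans (le_trans hs.1 hst) hwt.le, hwL⟩ hwN).2)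
        (not_le.mpr hwt)) hq
  -- β meets N
  have hβgeo : IsGeodesicIn Y β a' b' := ⟨g, hg0, hgl, hgiso, hβ⟩
  set W := Set.Icc (0:ℝ) L' ∩ g ⁻¹' N with hW
  have hL'0 : (0:ℝ) ≤ L' := dist_nonneg
  have hWne : W.Nonempty := by
    by_contra hcon
    rw [Set.not_nonempty_iff_eq_empty] at hcon
    have hfar : ∀ z ∈ β, C ≤ Metric.infDist z U := by
      rintro z hz
      rw [hβ] at hz
      obtain ⟨w, hw, rfl⟩ := hz
      have : w ∉ W := by rw [hcon]; exact Set.notMem_empty _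
      have hnot : g w ∉ N := fun h => this ⟨hw, h⟩
      rw [hN, mem_cth_iff hUne hr0.le] at hnot
      push_neg at hnot
      linarith
    have hdiam := hUcon a' b' β hβgeo hfar
    have hp'mem : p' ∈ projSetOf U β := by
      refine Set.mem_biUnion ?_ hp'
      rw [hβ]; exact ⟨0, ⟨le_refl _, hL'0⟩, hg0⟩
    have hq'mem : q' ∈ projSetOf U β := by
      refine Set.mem_biUnion ?_ hq'
      rw [hβ]; exact ⟨L', ⟨hL'0, le_refl _⟩, hgl⟩
    have hpq' : dist p' q' ≤ C := by
      have := (EMetric.edist_le_diam_of_mem hp'mem hq'mem).trans hdiam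
      rwa [edist_le_ofReal hC0.le] at this
    have : dist (f s) (f t) ≤ dist (f s) p' + dist p' q' + dist q' (f t) :=
      dist_triangle4 _ _ _ _
    have h1 : dist (f s) p' ≤ r + C + 10 * C := by
      calc dist (f s) p' ≤ dist (f s) p + dist p p' := dist_triangle _ _ _
        _ ≤ r + C + 10 * C := by linarith
    have h2 : dist q' (f t) ≤ r + C + 10 * C := by
      calc dist q' (f t) ≤ dist q' q + dist q (f t) := dist_triangle _ _ _
        _ ≤ r + C + 10 * C := by rw [dist_comm q' q, dist_comm q (f t)]; linarith
    nlinarith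
  have hWbb : BddBelow W := (bddBelow_Icc : BddBelow (Set.Icc (0:ℝ) L')).mono Set.inter_subset_left
  have hWba : BddAbove W := (bddAbove_Icc (a := (0:ℝ)) (b := L')).mono Set.inter_subset_left
  have hgcont : ContinuousOn g (Set.Icc (0:ℝ) L') := by
    refine LipschitzOnWith.continuousOn (K := 1) (LipschitzOnWith.of_dist_le_mul ?_)
    intro x hx y hy
    rw [hgiso x hx y hy]
    simp [Real.dist_eq]
  have hWcl : IsClosed W :=
    hgcont.preimage_isClosed_of_isClosed isClosed_Icc (Metric.isClosed_cthickening)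
  set u := sInf W with hu
  set v := sSup W with hv
  have huW : u ∈ W := hWcl.csInf_mem hWne hWbb
  have hvW : v ∈ W := hWcl.csSup_mem hWne hWba
  have huv : u ≤ v := csInf_le_csSup hWne hWbb hWba
  -- entry and exit bounds for β
  have hup' : dist (g u) p' ≤ r + C :=
    entry_bound hC hr hUcl hUne hUcon hg0 hgiso huW.1 huW.2
      (fun w hw0 hwu hwN => absurd (csInf_le hWbb ⟨⟨hw0, le_trans hwu.le huW.1.2⟩, hwN⟩)
        (not_le.mpr hwu)) hp'
  have hvq' : dist (g v) q' ≤ r + C :=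
    exit_bound hC hr hUcl hUne hUcon hgl hgiso hvW.1 hvW.2
      (fun w hwv hwL hwN => absurd (le_csSup hWba ⟨⟨le_trans (le_trans huW.1.1 huv) hwv.le, hwL⟩, hwN⟩)
        (not_le.mpr hwv)) hq'
  refine ⟨u, huW.1, v, hvW.1, huv, huW.2, hvW.2, ?_, ?_, ?_⟩
  · intro w hwI hwN
    exact ⟨csInf_le hWbb ⟨hwI, hwN⟩, le_csSup hWba ⟨hwI, hwN⟩⟩
  · calc dist (g u) (f s) ≤ dist (g u) p' + dist p' p + dist p (f s) := dist_triangle4 _ _ _ _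
      _ ≤ 4 * r := by
          rw [dist_comm p' p, dist_comm p (f s)]
          linarith
  · calc dist (g v) (f t) ≤ dist (g v) q' + dist q' q + dist q (f t) := dist_triangle4 _ _ _ _
      _ ≤ 4 * r := by
          rw [dist_comm q' q, dist_comm q (f t)]
          linarith


end ConfDyn
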